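/- Let G be a group, A and B proper subgroups of G, and φ: A → B an isomorphism. Then the HNN extension G* = ⟨G, t | t⁻¹at = φ(a), a ∈ A⟩ admits a surjective homomorphism onto ℤ sending every element of G to 0 and t to 1, and consequently G* has infinite C-width. -/

import Mathlib

/-- A subset `S` of a group is conjugation invariant if it is closed under
conjugation by all elements of the group. -/
def ConjInvariant {G : Type*} [Group G] (S : Set G) : Prop :=
  ∀ g s : G, s ∈ S → g⁻¹ * s * g ∈ S

/-- A group has finite width with respect to `S` if there is `n` such that every
element is a product of at most `n` elements of `S ∪ S⁻¹`. -/
def HasFiniteWidth {G : Type*} [Group G] (S : Set G) : Prop :=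
  ∃ n : ℕ, ∀ g : G, ∃ l : List G, (∀ x ∈ l, x ∈ S ∪ S⁻¹) ∧ l.prod = g ∧ l.length ≤ n

/-- A group has finite `C`-width if it has finite width with respect to every
conjugation invariant generating set. -/
def FiniteCWidth (G : Type*) [Group G] : Prop :=
  ∀ S : Set G, Subgroup.closure S = ⊤ → ConjInvariant S → HasFiniteWidth S

private lemma prod_toAdd_bound {H : Type*} [Group H] (ψ : H →* Multiplicative ℤ)
    (l : List H) (h : ∀ x ∈ l, |Multiplicative.toAdd (ψ x)| ≤ 1) :
    |Multiplicative.toAdd (ψ l.prod)| ≤ (l.length : ℤ) := by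
  induction l with
  | nil => simp
  | cons a l ih =>
    have ha := h a (List.mem_cons_self)
    have hl := ih (fun x hx => h x (List.mem_cons_of_mem a hx))
    simp only [List.prod_cons, map_mul, toAdd_mul, List.length_cons]
    calc |Multiplicative.toAdd (ψ a) + Multiplicative.toAdd (ψ l.prod)|
        ≤ |Multiplicative.toAdd (ψ a)| + |Multiplicative.toAdd (ψ l.prod)| := abs_add_le _ _
      _ ≤ 1 + l.length := add_le_add ha hl
      _ = ((l.length + 1 : ℕ) : ℤ) := by push_cast; ring

/-- An HNN extension of `G` over an isomorphism of proper subgroups `A ≃* B` surjects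
onto ℤ (sending `G` to `0` and `t` to `1`), and consequently has infinite `C`-width. -/
theorem hnnExtension_infinite_C_width (G : Type*) [Group G] (A B : Subgroup G)
    (hA : A ≠ ⊤) (hB : B ≠ ⊤) (φ : A ≃* B) :
    (∃ ψ : HNNExtension G A B φ →* Multiplicative ℤ,
      (∀ g : G, ψ (HNNExtension.of g) = 1) ∧
      ψ (HNNExtension.t) = Multiplicative.ofAdd (1 : ℤ) ∧
      Function.Surjective ψ) ∧
    ¬ FiniteCWidth (HNNExtension G A B φ) := by
  set ψ : HNNExtension G A B φ →* Multiplicative ℤ :=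
    HNNExtension.lift 1 (Multiplicative.ofAdd (1 : ℤ)) (by
      intro a; simp [mul_comm]) with hψdef
  have hof : ∀ g : G, ψ (HNNExtension.of g) = 1 := by
    intro g; simp [hψdef]
  have ht : ψ (HNNExtension.t) = Multiplicative.ofAdd (1 : ℤ) := by
    simp [hψdef]
  have htz : ∀ z : ℤ, ψ (HNNExtension.t ^ z) = Multiplicative.ofAdd z := by
    intro z
    rw [map_zpow, ht, ← ofAdd_zsmul, smul_eq_mul, mul_one]
  have hsurj : Function.Surjective ψ := by
    intro y
    exact ⟨HNNExtension.t ^ (Multiplicative.toAdd y), by rw [htz]; simp⟩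
  refine ⟨⟨ψ, hof, ht, hsurj⟩, ?_⟩
  intro hfin
  set S : Set (HNNExtension G A B φ) := {x | ψ x = Multiplicative.ofAdd (1 : ℤ)} with hS
  have hgen : Subgroup.closure S = ⊤ := by
    rw [eq_top_iff]
    intro x _
    induction x using HNNExtension.induction_on with
    | of g =>
      have h1 : HNNExtension.t ∈ Subgroup.closure S :=
        Subgroup.subset_closure ht
      have h2 : HNNExtension.t * HNNExtension.of g ∈ Subgroup.closure S := by
        apply Subgroup.subset_closure
        show ψ _ = _
        rw [map_mul, ht, hof, mul_one]
      have := mul_mem (inv_mem h1) h2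
      simpa [← mul_assoc] using this
    | t => exact Subgroup.subset_closure ht
    | mul x y hx hy => exact mul_mem (hx trivial) (hy trivial)
    | inv x hx => exact inv_mem (hx trivial)
  have hconj : ConjInvariant S := by
    intro g s hs
    show ψ _ = _
    rw [map_mul, map_mul, map_inv, mul_comm, ← mul_assoc, mul_inv_cancel, one_mul]
    exact hs
  obtain ⟨n, hn⟩ := hfin S hgen hconj
  obtain ⟨l, hl, hprod, hlen⟩ := hn (HNNExtension.t ^ ((n : ℤ) + 1))
  have hbound : |Multiplicative.toAdd (ψ l.prod)| ≤ (l.length : ℤ) := by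
    apply prod_toAdd_bound
    intro x hx
    rcases hl x hx with h | h
    · rw [hS] at h; simp only [Set.mem_setOf_eq] at h
      rw [h]; simp
    · have h' : ψ x⁻¹ = Multiplicative.ofAdd (1:ℤ) := h
      have : ψ x = (Multiplicative.ofAdd (1:ℤ))⁻¹ := by
        rw [← h']; simp
      rw [this]; simp
  rw [hprod, htz] at hbound
  simp only [toAdd_ofAdd] at hbound
  have : ((n : ℤ) + 1) ≤ l.length := le_trans (le_abs_self _) hbound
  have : (l.length : ℤ) ≤ n := by exact_mod_cast hlen
  omega
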